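/- Fix 0 < β ≤ 1 and an odd prime p. Let a_π : ℕ → ℂ with a_π(1) = 1, and suppose that for sequences (c_a), with c_a := p^{-a} Σ*_{χ mod p^a} conj(χ)(s) χ(r) L_a(χ) for suitable values L_a(χ), one has lim_{a→∞} c_a = (1/p)(1 − 1/p)·a_π(s/r)/(s/r)^β for all pairs of positive integers s, r coprime to p (with the convention a_π(s/r) = 0 when r ∤ s). If two such coefficient functions a_π, a_π' and values L_a, L'_a satisfy L_a(χ) = B^a·C·L'_a(χ) for all primitive p-power order χ of conductor p^a and all but finitely many a, with B, C ∈ ℂ nonzero, then B = C = 1 and a_π(n) = a_π'(n) for all n coprime to p. -/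

import Mathlib

theorem stmt_17 (p : ℕ) [Fact p.Prime] (hodd : Odd p)
    (β : ℝ) (hβ1 : 0 < β) (hβ2 : β ≤ 1)
    (aπ aπ' : ℕ → ℂ) (h1 : aπ 1 = 1) (h1' : aπ' 1 = 1)
    (F : (ℕ → ℂ) → ℕ → ℕ → ℂ)
    (hF : ∀ f s r, F f s r = if r ∣ s then f (s / r) else 0)
    (L L' : (a : ℕ) → DirichletCharacter ℂ (p ^ a) → ℂ)
    (hlim : ∀ s r : ℕ, 0 < s → 0 < r → ¬ p ∣ s → ¬ p ∣ r →
      Filter.Tendsto (fun a : ℕ =>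
        (p : ℂ) ^ (-(a : ℤ)) *
          ∑ᶠ χ ∈ {χ : DirichletCharacter ℂ (p ^ a) |
              (∃ k : ℕ, χ ^ (p ^ k) = 1) ∧ χ.IsPrimitive},
            (starRingEnd ℂ) (χ (s : ZMod (p ^ a))) * χ (r : ZMod (p ^ a)) * L a χ)
        Filter.atTop
        (nhds ((1 / (p : ℂ)) * (1 - 1 / (p : ℂ)) * F aπ s r / ((((s : ℝ) / r) ^ β : ℝ) : ℂ))))
    (hlim' : ∀ s r : ℕ, 0 < s → 0 < r → ¬ p ∣ s → ¬ p ∣ r →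
      Filter.Tendsto (fun a : ℕ =>
        (p : ℂ) ^ (-(a : ℤ)) *
          ∑ᶠ χ ∈ {χ : DirichletCharacter ℂ (p ^ a) |
              (∃ k : ℕ, χ ^ (p ^ k) = 1) ∧ χ.IsPrimitive},
            (starRingEnd ℂ) (χ (s : ZMod (p ^ a))) * χ (r : ZMod (p ^ a)) * L' a χ)
        Filter.atTop
        (nhds ((1 / (p : ℂ)) * (1 - 1 / (p : ℂ)) * F aπ' s r / ((((s : ℝ) / r) ^ β : ℝ) : ℂ))))
    (B C : ℂ) (hB : B ≠ 0) (hC : C ≠ 0)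
    (hrel : ∃ N : ℕ, ∀ a : ℕ, N ≤ a → ∀ χ : DirichletCharacter ℂ (p ^ a),
      (∃ k : ℕ, χ ^ (p ^ k) = 1) → χ.IsPrimitive → L a χ = B ^ a * C * L' a χ) :
    B = 1 ∧ C = 1 ∧ ∀ n : ℕ, 0 < n → ¬ p ∣ n → aπ n = aπ' n := by
  obtain ⟨N, hN⟩ := hrel
  have hp : p.Prime := Fact.out
  have hp2 : 2 ≤ p := hp.two_le
  have hpC : (p : ℂ) ≠ 0 := Nat.cast_ne_zero.2 (by omega)
  have hp1 : ¬ p ∣ 1 := fun h => absurd (Nat.le_of_dvd one_pos h) (by omega)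
  set T : ℂ := (1 / (p : ℂ)) * (1 - 1 / (p : ℂ)) with hT
  have hTne : T ≠ 0 := by
    apply mul_ne_zero (one_div_ne_zero hpC)
    rw [sub_ne_zero]
    intro h
    rw [eq_div_iff hpC, one_mul] at h
    exact absurd h (by exact_mod_cast (by omega : ¬ p = 1))
  -- key rewriting of the L-sum in terms of the L'-sum
  have key : ∀ s r : ℕ, ∀ a : ℕ, N ≤ a →
      ((p : ℂ) ^ (-(a : ℤ)) *
        ∑ᶠ χ ∈ {χ : DirichletCharacter ℂ (p ^ a) |
            (∃ k : ℕ, χ ^ (p ^ k) = 1) ∧ χ.IsPrimitive},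
          (starRingEnd ℂ) (χ (s : ZMod (p ^ a))) * χ (r : ZMod (p ^ a)) * L a χ)
      = B ^ a * C *
        ((p : ℂ) ^ (-(a : ℤ)) *
        ∑ᶠ χ ∈ {χ : DirichletCharacter ℂ (p ^ a) |
            (∃ k : ℕ, χ ^ (p ^ k) = 1) ∧ χ.IsPrimitive},
          (starRingEnd ℂ) (χ (s : ZMod (p ^ a))) * χ (r : ZMod (p ^ a)) * L' a χ) := by
    intro s r a ha
    have : NeZero (p ^ a) := ⟨pow_ne_zero _ (by omega)⟩
    have hsum : (∑ᶠ χ ∈ {χ : DirichletCharacter ℂ (p ^ a) |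
            (∃ k : ℕ, χ ^ (p ^ k) = 1) ∧ χ.IsPrimitive},
          (starRingEnd ℂ) (χ (s : ZMod (p ^ a))) * χ (r : ZMod (p ^ a)) * L a χ)
        = B ^ a * C * ∑ᶠ χ ∈ {χ : DirichletCharacter ℂ (p ^ a) |
            (∃ k : ℕ, χ ^ (p ^ k) = 1) ∧ χ.IsPrimitive},
          (starRingEnd ℂ) (χ (s : ZMod (p ^ a))) * χ (r : ZMod (p ^ a)) * L' a χ := by
      rw [finsum_mem_def, finsum_mem_def, mul_finsum _ _]
      apply finsum_congr
      intro χ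
      by_cases h : χ ∈ {χ : DirichletCharacter ℂ (p ^ a) |
          (∃ k : ℕ, χ ^ (p ^ k) = 1) ∧ χ.IsPrimitive}
      · rw [Set.indicator_of_mem h, Set.indicator_of_mem h, hN a ha χ h.1 h.2]; ring
      · rw [Set.indicator_of_notMem h, Set.indicator_of_notMem h, mul_zero]
    rw [hsum]; ring
  -- limits at s = r = 1
  have hf1 := hlim 1 1 one_pos one_pos hp1 hp1
  have hg1 := hlim' 1 1 one_pos one_pos hp1 hp1
  have hval : T * F aπ 1 1 / (((((1 : ℕ) : ℝ) / ((1 : ℕ) : ℝ)) ^ β : ℝ) : ℂ) = T := by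
    rw [hF]
    norm_num [h1]
  have hval' : T * F aπ' 1 1 / (((((1 : ℕ) : ℝ) / ((1 : ℕ) : ℝ)) ^ β : ℝ) : ℂ) = T := by
    rw [hF]
    norm_num [h1']
  rw [hval] at hf1
  rw [hval'] at hg1
  -- g eventually nonzero
  have hgne : ∀ᶠ a in Filter.atTop, (fun a : ℕ =>
        (p : ℂ) ^ (-(a : ℤ)) *
          ∑ᶠ χ ∈ {χ : DirichletCharacter ℂ (p ^ a) |
              (∃ k : ℕ, χ ^ (p ^ k) = 1) ∧ χ.IsPrimitive},
            (starRingEnd ℂ) (χ ((1 : ℕ) : ZMod (p ^ a))) * χ ((1 : ℕ) : ZMod (p ^ a)) * L' a χ) a ≠ 0 :=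
    hg1.eventually_ne hTne
  -- B ^ a * C tends to 1
  have hBC : Filter.Tendsto (fun a : ℕ => B ^ a * C) Filter.atTop (nhds 1) := by
    have hdiv := hf1.div hg1 hTne
    rw [div_self hTne] at hdiv
    apply hdiv.congr'
    filter_upwards [hgne, Filter.eventually_ge_atTop N] with a hga ha
    simp only [Pi.div_apply]
    rw [div_eq_iff hga]
    exact key 1 1 a ha
  -- B = 1
  have hBone : B = 1 := by
    have h2 : Filter.Tendsto (fun a : ℕ => B ^ (a + 1) * C) Filter.atTop (nhds 1) :=
      hBC.comp (Filter.tendsto_add_atTop_nat 1)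
    have h3 : Filter.Tendsto (fun a : ℕ => B * (B ^ a * C)) Filter.atTop (nhds (B * 1)) :=
      hBC.const_mul B
    have h4 : Filter.Tendsto (fun a : ℕ => B ^ (a + 1) * C) Filter.atTop (nhds (B * 1)) := by
      apply h3.congr; intro a; ring
    have := tendsto_nhds_unique h2 h4
    rwa [mul_one, eq_comm] at this
  -- C = 1
  have hCone : C = 1 := by
    have hc : Filter.Tendsto (fun _ : ℕ => C) Filter.atTop (nhds 1) := by
      apply hBC.congr; intro a; rw [hBone, one_pow, one_mul]
    exact tendsto_nhds_unique tendsto_const_nhds hc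
  refine ⟨hBone, hCone, fun n hn hpn => ?_⟩
  -- coefficient comparison at s = n, r = 1
  have hcoef := hlim n 1 hn one_pos hpn hp1
  have hcoef' := hlim' n 1 hn one_pos hpn hp1
  have hcoef2 : Filter.Tendsto (fun a : ℕ =>
      (p : ℂ) ^ (-(a : ℤ)) *
        ∑ᶠ χ ∈ {χ : DirichletCharacter ℂ (p ^ a) |
            (∃ k : ℕ, χ ^ (p ^ k) = 1) ∧ χ.IsPrimitive},
          (starRingEnd ℂ) (χ ((n : ℕ) : ZMod (p ^ a))) * χ ((1 : ℕ) : ZMod (p ^ a)) * L' a χ)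
      Filter.atTop
      (nhds (T * F aπ n 1 / (((((n : ℕ) : ℝ) / ((1 : ℕ) : ℝ)) ^ β : ℝ) : ℂ))) := by
    apply hcoef.congr'
    filter_upwards [Filter.eventually_ge_atTop N] with a ha
    have hk := key n 1 a ha
    rw [hBone, hCone] at hk
    simpa using hk
  have hlimeq := tendsto_nhds_unique hcoef2 hcoef'
  have hDne : ((((((n : ℕ) : ℝ)) / ((1 : ℕ) : ℝ)) ^ β : ℝ) : ℂ) ≠ 0 := by
    have h0 : (0 : ℝ) < (((n : ℕ) : ℝ) / ((1 : ℕ) : ℝ)) ^ β := by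
      apply Real.rpow_pos_of_pos
      simp only [Nat.cast_one, div_one]
      exact_mod_cast hn
    exact_mod_cast h0.ne'
  rw [div_eq_div_iff hDne hDne] at hlimeq
  have h5 := mul_right_cancel₀ hDne hlimeq
  rw [hF, hF] at h5
  simp only [one_dvd, if_true, Nat.div_one] at h5
  exact mul_left_cancel₀ hTne h5
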